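/- For every integer n ≥ 0 and every real t with |t| > 1, the Legendre polynomial satisfies |L_n(t)| ≤ (|t| + √(t²−1))^n. -/

import Mathlib

open Polynomial Finset

/-- The `n`-th Legendre polynomial, defined via Rodrigues' formula. -/
noncomputable def legendre (n : ℕ) : ℝ → ℝ := fun t =>
  ((-1 : ℝ) ^ n / (2 ^ n * n.factorial)) * iteratedDeriv n (fun x : ℝ => (1 - x ^ 2) ^ n) t

lemma iteratedDeriv_polynomial (p : ℝ[X]) (n : ℕ) :
    iteratedDeriv n (fun x => p.eval x) = fun x => (derivative^[n] p).eval x := by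
  induction n with
  | zero => simp
  | succ n ih =>
      rw [iteratedDeriv_succ, ih]
      funext x
      rw [Function.iterate_succ_apply']
      exact Polynomial.deriv _

lemma legendre_eq_sum (n : ℕ) (t : ℝ) :
    legendre n t =
      (∑ k ∈ range (n + 1), ((n.choose k : ℝ)) ^ 2 * (t - 1) ^ k * (t + 1) ^ (n - k)) / 2 ^ n := by
  have hpoly : (fun x : ℝ => (1 - x ^ 2) ^ n)
      = fun x => ((C ((-1 : ℝ) ^ n) * ((X - C 1) ^ n * (X + C 1) ^ n)).eval x) := by
    funext x
    simp only [eval_mul, eval_C, eval_pow, eval_sub, eval_add, eval_X, eval_one]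
    rw [← mul_pow, ← mul_pow]
    ring_nf
  rw [legendre, hpoly, iteratedDeriv_polynomial, iterate_derivative_C_mul,
    iterate_derivative_mul]
  simp only [eval_mul, eval_C, eval_finset_sum, eval_smul, smul_eq_mul,
    iterate_derivative_X_sub_pow, iterate_derivative_X_add_pow, eval_mul, eval_smul,
    eval_pow, eval_sub, eval_add, eval_X, eval_one, smul_eq_mul]
  rw [Finset.mul_sum, Finset.mul_sum, Finset.sum_div]
  refine Finset.sum_congr rfl fun k hk => ?_
  have hk' : k ≤ n := Nat.lt_succ_iff.mp (Finset.mem_range.mp hk)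
  rw [Nat.sub_sub_self hk']
  have hcoef : (n.choose k : ℝ) * (n.descFactorial (n - k)) * (n.descFactorial k)
      = (n.choose k : ℝ) ^ 2 * n.factorial := by
    have h1 : n.descFactorial (n - k) = (n - k).factorial * n.choose (n - k) :=
      Nat.descFactorial_eq_factorial_mul_choose n (n - k)
    have h2 : n.descFactorial k = k.factorial * n.choose k :=
      Nat.descFactorial_eq_factorial_mul_choose n k
    have h3 : n.choose (n - k) = n.choose k := Nat.choose_symm hk'
    have h4 : n.choose k * k.factorial * (n - k).factorial = n.factorial :=
      Nat.choose_mul_factorial_mul_factorial hk'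
    rw [h1, h2, h3]
    push_cast [← h4]
    ring
  have hfac : (n.factorial : ℝ) ≠ 0 := Nat.cast_ne_zero.mpr n.factorial_ne_zero
  have h2n : (2 : ℝ) ^ n ≠ 0 := by positivity
  field_simp
  ring_nf
  rw [pow_mul', neg_one_sq, one_pow, mul_one, ← hcoef]
  ring

/-- For `|t| > 1`, `|L_n(t)| ≤ (|t| + √(t²−1))^n`. -/
theorem abs_legendre_le_of_one_lt_abs (n : ℕ) (t : ℝ) (ht : 1 < |t|) :
    |legendre n t| ≤ (|t| + Real.sqrt (t ^ 2 - 1)) ^ n := by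
  have ht2 : (1 : ℝ) < t ^ 2 := by nlinarith [sq_abs t]
  set a := |t - 1| with ha
  set b := |t + 1| with hb
  have ha0 : (0 : ℝ) ≤ a := abs_nonneg _
  have hb0 : (0 : ℝ) ≤ b := abs_nonneg _
  have hab : a * b = t ^ 2 - 1 := by
    rw [ha, hb, ← abs_mul, abs_of_nonneg (by nlinarith : (0:ℝ) ≤ (t - 1) * (t + 1))]
    ring
  have hsum : a + b = 2 * |t| := by
    rcases le_or_gt 0 t with h | h
    · have h1 : 1 < t := by rwa [abs_of_nonneg h] at ht
      rw [ha, hb, abs_of_nonneg (by linarith), abs_of_nonneg (by linarith), abs_of_nonneg h]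
      ring
    · have h1 : t < -1 := by rw [abs_of_neg h] at ht; linarith
      rw [ha, hb, abs_of_nonpos (by linarith), abs_of_nonpos (by linarith), abs_of_neg h]
      ring
  have hsqrt : Real.sqrt a * Real.sqrt b = Real.sqrt (t ^ 2 - 1) := by
    rw [← Real.sqrt_mul ha0, hab]
  have h2n : (0 : ℝ) < 2 ^ n := by positivity
  have key : |legendre n t| ≤
      (∑ k ∈ range (n + 1), (n.choose k : ℝ) ^ 2 * a ^ k * b ^ (n - k)) / 2 ^ n := by
    rw [legendre_eq_sum, abs_div, abs_of_pos h2n]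
    gcongr
    calc |∑ k ∈ range (n + 1), (n.choose k : ℝ) ^ 2 * (t - 1) ^ k * (t + 1) ^ (n - k)|
        ≤ ∑ k ∈ range (n + 1), |(n.choose k : ℝ) ^ 2 * (t - 1) ^ k * (t + 1) ^ (n - k)| :=
          Finset.abs_sum_le_sum_abs _ _
      _ = ∑ k ∈ range (n + 1), (n.choose k : ℝ) ^ 2 * a ^ k * b ^ (n - k) := by
          refine Finset.sum_congr rfl fun k _ => ?_
          rw [abs_mul, abs_mul, abs_pow, abs_pow, abs_pow, sq_abs]
  have step2 : (∑ k ∈ range (n + 1), (n.choose k : ℝ) ^ 2 * a ^ k * b ^ (n - k))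
      ≤ ((Real.sqrt a + Real.sqrt b) ^ n) ^ 2 := by
    have hterm : ∀ k ∈ range (n + 1), (n.choose k : ℝ) ^ 2 * a ^ k * b ^ (n - k)
        = ((n.choose k : ℝ) * Real.sqrt a ^ k * Real.sqrt b ^ (n - k)) ^ 2 := by
      intro k _
      rw [mul_pow, mul_pow, ← pow_mul, ← pow_mul, mul_comm k 2, mul_comm (n - k) 2,
        pow_mul, pow_mul, Real.sq_sqrt ha0, Real.sq_sqrt hb0]
    rw [Finset.sum_congr rfl hterm]
    calc (∑ k ∈ range (n + 1), ((n.choose k : ℝ) * Real.sqrt a ^ k * Real.sqrt b ^ (n - k)) ^ 2)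
        ≤ (∑ k ∈ range (n + 1), (n.choose k : ℝ) * Real.sqrt a ^ k * Real.sqrt b ^ (n - k)) ^ 2 := by
          apply Finset.sum_sq_le_sq_sum_of_nonneg
          intro k _
          positivity
      _ = ((Real.sqrt a + Real.sqrt b) ^ n) ^ 2 := by
          rw [add_pow]
          congr 1
          refine Finset.sum_congr rfl fun k _ => ?_
          ring
  have step3 : ((Real.sqrt a + Real.sqrt b) ^ n) ^ 2
      = (2 * (|t| + Real.sqrt (t ^ 2 - 1))) ^ n := by
    rw [← pow_mul, pow_mul']
    congr 1
    rw [add_sq, Real.sq_sqrt ha0, Real.sq_sqrt hb0, mul_assoc, hsqrt]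
    linarith [hsum]
  have heq : ((Real.sqrt a + Real.sqrt b) ^ n) ^ 2 / 2 ^ n
      = (|t| + Real.sqrt (t ^ 2 - 1)) ^ n := by
    rw [step3, mul_pow, mul_comm ((2:ℝ)^n), mul_div_assoc, div_self (ne_of_gt h2n), mul_one]
  calc |legendre n t| ≤ _ := key
    _ ≤ ((Real.sqrt a + Real.sqrt b) ^ n) ^ 2 / 2 ^ n := by gcongr
    _ = _ := heq
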